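/- Let n ≥ 1 and let f : ℝⁿ → ℝ be differentiable with gradient ∇f Lipschitz continuous with constant L ≥ 0. Fix x̄ ∈ ℝⁿ and ε > 0, and let Y be the coordinate simplex [x̄, x̄ + εe₁, …, x̄ + εe_n], where e_i is the i-th standard basis vector. Then the simplex gradient of f over Y is the vector g^ε with components (g^ε)_i = (f(x̄ + εe_i) − f(x̄))/ε, and it satisfies ‖g^ε − ∇f(x̄)‖ ≤ (√n · L / 2) · ε. (This combines Remark 3.1 of the paper, where M̂ = I and ‖M̂⁻¹‖ = 1 for the coordinate simplex, with the simplex-gradient error bound.) -/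

import Mathlib

open scoped RealInnerProductSpace

lemma descent_lemma_aux {n : ℕ} (f : EuclideanSpace ℝ (Fin n) → ℝ)
    (hf : Differentiable ℝ f) (L : ℝ)
    (hlip : ∀ x y : EuclideanSpace ℝ (Fin n),
      ‖gradient f x - gradient f y‖ ≤ L * ‖x - y‖)
    (x v : EuclideanSpace ℝ (Fin n)) :
    |f (x + v) - f x - ⟪gradient f x, v⟫| ≤ L / 2 * ‖v‖ ^ 2 := by
  set g : ℝ → ℝ := fun t => f (x + t • v) - f x - t * ⟪gradient f x, v⟫ with hg
  set g' : ℝ → ℝ := fun t => ⟪gradient f (x + t • v) - gradient f x, v⟫ with hg'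
  have hderiv : ∀ t : ℝ, HasDerivAt g (g' t) t := by
    intro t
    have hc : HasDerivAt (fun t : ℝ => x + t • v) v t := by
      simpa using ((hasDerivAt_id t).smul_const v).const_add x
    have h1 : HasDerivAt (fun t : ℝ => f (x + t • v)) (fderiv ℝ f (x + t • v) v) t :=
      (hf.differentiableAt.hasFDerivAt).comp_hasDerivAt t hc
    have h2 := (h1.sub_const (f x)).sub ((hasDerivAt_id t).mul_const ⟪gradient f x, v⟫)
    have he : fderiv ℝ f (x + t • v) v = ⟪gradient f (x + t • v), v⟫ := by
      rw [gradient, InnerProductSpace.toDual_symm_apply]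
    have h3 : HasDerivAt g ((fderiv ℝ f (x + t • v)) v - 1 * ⟪gradient f x, v⟫) t := h2
    rw [he, one_mul] at h3
    convert h3 using 1
    exact inner_sub_left _ _ _
  have key := image_norm_le_of_norm_deriv_right_le_deriv_boundary
    (f := g) (f' := g') (a := 0) (b := 1)
    (B := fun t => L * ‖v‖ ^ 2 * (t ^ 2 / 2)) (B' := fun t => L * ‖v‖ ^ 2 * t)
    (fun t _ => (hderiv t).continuousAt.continuousWithinAt)
    (fun t _ => (hderiv t).hasDerivWithinAt)
    (by simp [hg])
    (fun t => by
      simpa using (((hasDerivAt_pow 2 t).div_const 2).const_mul (L * ‖v‖ ^ 2)))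
    (fun t ht => by
      have h1 : |(⟪gradient f (x + t • v) - gradient f x, v⟫ : ℝ)|
          ≤ ‖gradient f (x + t • v) - gradient f x‖ * ‖v‖ := abs_real_inner_le_norm _ _
      have h2 : ‖gradient f (x + t • v) - gradient f x‖ ≤ L * (t * ‖v‖) := by
        have := hlip (x + t • v) x
        simpa [norm_smul, abs_of_nonneg ht.1] using this
      have hv : (0:ℝ) ≤ ‖v‖ := norm_nonneg _
      calc ‖g' t‖ ≤ ‖gradient f (x + t • v) - gradient f x‖ * ‖v‖ := h1
        _ ≤ L * (t * ‖v‖) * ‖v‖ := by nlinarith [norm_nonneg (gradient f (x + t • v) - gradient f x)]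
        _ = L * ‖v‖ ^ 2 * t := by ring)
  have h1 := key (x := 1) (by norm_num)
  have h3 : L * ‖v‖ ^ 2 * ((1:ℝ) ^ 2 / 2) = L / 2 * ‖v‖ ^ 2 := by ring
  rw [h3] at h1
  simpa [hg, Real.norm_eq_abs] using h1

theorem coordinate_simplex_gradient_error_bound
    (n : ℕ) (hn : 1 ≤ n) (f : EuclideanSpace ℝ (Fin n) → ℝ)
    (hf : Differentiable ℝ f) (L : ℝ) (hL : 0 ≤ L)
    (hlip : ∀ x y : EuclideanSpace ℝ (Fin n),
      ‖gradient f x - gradient f y‖ ≤ L * ‖x - y‖)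
    (xbar : EuclideanSpace ℝ (Fin n)) (ε : ℝ) (hε : 0 < ε)
    (gε : EuclideanSpace ℝ (Fin n))
    (hgε : ∀ i, gε i = (f (xbar + ε • EuclideanSpace.single i (1 : ℝ)) - f xbar) / ε) :
    ‖gε - gradient f xbar‖ ≤ (Real.sqrt n * L / 2) * ε := by
  have hcomp : ∀ i, |gε i - gradient f xbar i| ≤ L / 2 * ε := by
    intro i
    have key := descent_lemma_aux f hf L hlip xbar (ε • EuclideanSpace.single i (1 : ℝ))
    have hnorm : ‖ε • EuclideanSpace.single i (1 : ℝ)‖ = ε := by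
      rw [norm_smul, EuclideanSpace.norm_single]
      simp [abs_of_pos hε]
    have hin : ⟪gradient f xbar, ε • EuclideanSpace.single i (1 : ℝ)⟫
        = ε * gradient f xbar i := by
      rw [real_inner_smul_right, EuclideanSpace.inner_single_right]
      simp
    rw [hnorm, hin] at key
    have h1 : gε i - gradient f xbar i
        = (f (xbar + ε • EuclideanSpace.single i (1 : ℝ)) - f xbar
            - ε * gradient f xbar i) / ε := by
      rw [hgε i]; field_simp
    rw [h1, abs_div, abs_of_pos hε, div_le_iff₀ hε]
    calc |f (xbar + ε • EuclideanSpace.single i (1 : ℝ)) - f xbar - ε * gradient f xbar i|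
        ≤ L / 2 * ε ^ 2 := key
      _ = L / 2 * ε * ε := by ring
  have hnn : (0:ℝ) ≤ L / 2 * ε := by positivity
  have hEnorm : ‖gε - gradient f xbar‖
      ≤ Real.sqrt (n * (L / 2 * ε) ^ 2) := by
    rw [EuclideanSpace.norm_eq]
    apply Real.sqrt_le_sqrt
    calc ∑ i, ‖(gε - gradient f xbar) i‖ ^ 2
        ≤ ∑ _i : Fin n, (L / 2 * ε) ^ 2 := by
          apply Finset.sum_le_sum
          intro i _
          have : ‖(gε - gradient f xbar) i‖ = |gε i - gradient f xbar i| := by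
            simp [Real.norm_eq_abs]
          rw [this]
          exact pow_le_pow_left₀ (abs_nonneg _) (hcomp i) 2
      _ = n * (L / 2 * ε) ^ 2 := by simp [Finset.sum_const, mul_comm]
  calc ‖gε - gradient f xbar‖ ≤ Real.sqrt (n * (L / 2 * ε) ^ 2) := hEnorm
    _ = Real.sqrt n * (L / 2 * ε) := by
        rw [Real.sqrt_mul (by positivity), Real.sqrt_sq hnn]
    _ = (Real.sqrt n * L / 2) * ε := by ring
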